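/- Let n ≥ 2 be an integer, g' > 0 and T₁ ∈ ℝ. Set X(t) = e^{(T₁−t)/(n−1)}, z'(t) = (n/((n−1)·g'))·X(t)/(1+X(t)), z''(t) = −(n/((n−1)²·g'))·X(t)/(1+X(t))², and V₂'(t) = (n/(n−1)²)·X(t)/(1+X(t))². Then for every t ∈ ℝ: (a) ∫_t^∞ z'(s)^{n−2}·z''(s)·V₂'(s) ds = (g'/(n−1))·(n/((n−1)·g'))ⁿ·[−1/(n·(n+1)) + Σ_{r=0}^{n−1} (−1)^r·binom(n−1,r)/((r+2)·(1+X(t))^{r+2})]; (b) ∫_t^∞ z'(s)ⁿ·V₂'(s) ds = (g'/(n+1))·(n/((n−1)·g'))^{n+1}·X(t)^{n+1}/(1+X(t))^{n+1}. -/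

import Mathlib

open MeasureTheory Finset Filter Topology

lemma alg1a (r : ℕ) (Kr c e : ℝ) (hc : c ≠ 0) (h1 : 1 + e ≠ 0) :
    Kr * e / (c * (1+e)^(r+3))
    = (0 * (((r:ℝ)+2) * (1+e)^(r+2))
        - Kr * (((r:ℝ)+2) * (↑(r+2) * (1+e)^(r+2-1) * (-(e/c)))))
      / (((r:ℝ)+2) * (1+e)^(r+2))^2 := by
  have e1 : r + 2 - 1 = r + 1 := rfl
  have hr : ((r:ℝ)+2) ≠ 0 := by positivity
  rw [e1]
  push_cast
  field_simp
  ring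

lemma alg1 (m : ℕ) (g' e : ℝ) (hg : g' ≠ 0) (h1 : 1 + e ≠ 0) :
    ((↑m + 2) / ((↑m + 1) * g') * e / (1 + e)) ^ m
      * (-((↑m + 2) / (((↑m:ℝ) + 1) ^ 2 * g')) * e / (1 + e) ^ 2)
      * ((↑m + 2) / ((↑m:ℝ) + 1) ^ 2 * e / (1 + e) ^ 2)
    = -((g' / ((↑m:ℝ) + 1) * (((↑m:ℝ) + 2) / (((↑m:ℝ) + 1) * g')) ^ (m + 2))
        * (e ^ (m+2) / (((↑m:ℝ) + 1) * (1 + e) ^ (m + 4)))) := by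
  have hm1 : ((m:ℝ)+1) ≠ 0 := by positivity
  simp only [div_pow, mul_pow]
  field_simp
  ring

lemma alg2 (m : ℕ) (g' e : ℝ) (hg : g' ≠ 0) (h1 : 1 + e ≠ 0) :
    ((↑m + 2) / ((↑m + 1) * g') * e / (1 + e)) ^ (m + 2) * ((↑m + 2) / ((↑m:ℝ) + 1) ^ 2 * e / (1 + e) ^ 2)
    = -(g' / ((↑m:ℝ) + 2 + 1) * (((↑m:ℝ) + 2) / ((↑m + 1) * g')) ^ (m + 2 + 1) *
        (↑(m + 3) * (e / (1 + e)) ^ (m + 2) * (-(e / ((↑m:ℝ) + 1)) / (1 + e) ^ 2))) := by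
  have hm1 : ((m:ℝ)+1) ≠ 0 := by positivity
  have hm3 : ((m:ℝ)+2+1) ≠ 0 := by positivity
  push_cast
  rw [show ((↑m:ℝ) + 2) / ((↑m + 1) * g') * e / (1 + e)
      = ((↑m+2)/((↑m+1)*g')) * (e/(1+e)) from by ring, mul_pow, pow_succ]
  simp only [div_pow, mul_pow]
  field_simp
  ring

lemma collapse (x : ℝ) (m : ℕ) :
    ∑ r ∈ Finset.range (m+1), (-1:ℝ)^r * (m.choose r) * (1+x)^(m-r) = x^m := by
  have h : x ^ m = ((1+x) - 1) ^ m := by ring_nf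
  rw [h, sub_pow, ← Finset.sum_range_reflect]
  apply Finset.sum_congr rfl
  intro r hr
  rw [Finset.mem_range] at hr
  have hrm : r ≤ m := by omega
  have h1 : m + 1 - 1 - r = m - r := by omega
  rw [h1, Nat.choose_symm hrm]
  have h3 : (-1:ℝ) ^ (m - r) = (-1)^(r+m) := by
    have : r + m = (m - r) + 2 * r := by omega
    rw [this, pow_add, pow_mul, neg_one_sq, one_pow, mul_one]
  have h2 : m - (m - r) = r := by omega
  rw [h3, h2]
  ring

lemma key_sum (m : ℕ) :
    ∑ r ∈ Finset.range (m+1), (-1:ℝ)^r * (m.choose r) / ((r:ℝ)+2)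
      = 1/(((m:ℝ)+1)*((m:ℝ)+2)) := by
  have expand : ∀ x : ℝ, x * (1-x)^m = ∑ r ∈ Finset.range (m+1),
      (-1:ℝ)^r * (m.choose r) * x^(r+1) := by
    intro x
    have : (1 - x : ℝ) = (-x) + 1 := by ring
    rw [this, add_pow, Finset.mul_sum]
    apply Finset.sum_congr rfl
    intro r _
    rw [neg_pow]
    ring
  have h1 : (∫ x in (0:ℝ)..1, x * (1-x)^m) = 1/(((m:ℝ)+1)*((m:ℝ)+2)) := by
    have e : ∀ x : ℝ, x * (1-x)^m = (1-x)^m - (1-x)^(m+1) := by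
      intro x; ring
    simp only [e]
    rw [intervalIntegral.integral_sub]
    · have c1 : (∫ x in (0:ℝ)..1, (1-x)^m) = 1/((m:ℝ)+1) := by
        rw [intervalIntegral.integral_comp_sub_left (fun u : ℝ => u^m) 1]
        simp [integral_pow]
      have c2 : (∫ x in (0:ℝ)..1, (1-x)^(m+1)) = 1/((m:ℝ)+2) := by
        rw [intervalIntegral.integral_comp_sub_left (fun u : ℝ => u^(m+1)) 1]
        simp [integral_pow]
        push_cast; ring
      rw [c1, c2]
      field_simp
      ring
    · exact ((continuous_const.sub continuous_id).pow m).intervalIntegrable _ _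
    · exact ((continuous_const.sub continuous_id).pow (m+1)).intervalIntegrable _ _
  have h2 : (∫ x in (0:ℝ)..1, x * (1-x)^m)
      = ∑ r ∈ Finset.range (m+1), (-1:ℝ)^r * (m.choose r) / ((r:ℝ)+2) := by
    simp only [expand]
    rw [intervalIntegral.integral_finset_sum]
    · apply Finset.sum_congr rfl
      intro r _
      rw [intervalIntegral.integral_const_mul, integral_pow]
      push_cast
      ring
    · intro r _
      apply IntervalIntegrable.const_mul
      exact (intervalIntegral.intervalIntegrable_pow _)
  rw [← h1, h2]

theorem linearization_integrals
    (n : ℕ) (hn : 2 ≤ n) (g' T₁ : ℝ) (hg' : 0 < g') (t : ℝ) :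
    ((∫ s in Set.Ioi t,
        ((n : ℝ) / (((n : ℝ) - 1) * g') * Real.exp ((T₁ - s) / ((n : ℝ) - 1))
          / (1 + Real.exp ((T₁ - s) / ((n : ℝ) - 1)))) ^ (n - 2)
        * (-((n : ℝ) / (((n : ℝ) - 1) ^ 2 * g')) * Real.exp ((T₁ - s) / ((n : ℝ) - 1))
            / (1 + Real.exp ((T₁ - s) / ((n : ℝ) - 1))) ^ 2)
        * ((n : ℝ) / ((n : ℝ) - 1) ^ 2 * Real.exp ((T₁ - s) / ((n : ℝ) - 1))
            / (1 + Real.exp ((T₁ - s) / ((n : ℝ) - 1))) ^ 2)) =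
      g' / ((n : ℝ) - 1) * ((n : ℝ) / (((n : ℝ) - 1) * g')) ^ n *
        (-(1 / ((n : ℝ) * ((n : ℝ) + 1)))
          + ∑ r ∈ Finset.range n, (-1 : ℝ) ^ r * ((n - 1).choose r : ℝ)
              / (((r : ℝ) + 2) * (1 + Real.exp ((T₁ - t) / ((n : ℝ) - 1))) ^ (r + 2)))) ∧
    ((∫ s in Set.Ioi t,
        ((n : ℝ) / (((n : ℝ) - 1) * g') * Real.exp ((T₁ - s) / ((n : ℝ) - 1))
          / (1 + Real.exp ((T₁ - s) / ((n : ℝ) - 1)))) ^ n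
        * ((n : ℝ) / ((n : ℝ) - 1) ^ 2 * Real.exp ((T₁ - s) / ((n : ℝ) - 1))
            / (1 + Real.exp ((T₁ - s) / ((n : ℝ) - 1))) ^ 2)) =
      g' / ((n : ℝ) + 1) * ((n : ℝ) / (((n : ℝ) - 1) * g')) ^ (n + 1)
        * Real.exp ((T₁ - t) / ((n : ℝ) - 1)) ^ (n + 1)
        / (1 + Real.exp ((T₁ - t) / ((n : ℝ) - 1))) ^ (n + 1)) := by
  obtain ⟨m, rfl⟩ : ∃ m, n = m + 2 := ⟨n - 2, by omega⟩
  have e1 : m + 2 - 1 = m + 1 := rfl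
  have e2 : m + 2 - 2 = m := rfl
  simp only [e1, e2]
  push_cast
  have h21 : ((m:ℝ) + 2 - 1) = (m:ℝ) + 1 := by ring
  simp only [h21]
  have hg0 : g' ≠ 0 := ne_of_gt hg'
  have hm1 : (0:ℝ) < (m:ℝ) + 1 := by positivity
  have hm1' : ((m:ℝ)+1) ≠ 0 := ne_of_gt hm1
  -- the exponential
  have hE : ∀ s : ℝ, HasDerivAt (fun s : ℝ => Real.exp ((T₁ - s) / ((m:ℝ)+1)))
      (-(Real.exp ((T₁ - s) / ((m:ℝ)+1)) / ((m:ℝ)+1))) s := by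
    intro s
    have h : HasDerivAt (fun s : ℝ => (T₁ - s) / ((m:ℝ)+1)) (-1 / ((m:ℝ)+1)) s := by
      simpa using ((hasDerivAt_id s).const_sub T₁).div_const ((m:ℝ)+1)
    have := h.exp
    convert this using 1
    ring
  have hEpos : ∀ s : ℝ, 0 < Real.exp ((T₁ - s) / ((m:ℝ)+1)) := fun s => Real.exp_pos _
  have h1E : ∀ s : ℝ, 0 < 1 + Real.exp ((T₁ - s) / ((m:ℝ)+1)) := by
    intro s; have := hEpos s; linarith
  have h1E' : ∀ s : ℝ, (1 + Real.exp ((T₁ - s) / ((m:ℝ)+1))) ≠ 0 := fun s => ne_of_gt (h1E s)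
  have hE0 : Tendsto (fun s : ℝ => Real.exp ((T₁ - s) / ((m:ℝ)+1))) atTop (𝓝 0) := by
    apply Real.tendsto_exp_atBot.comp
    rw [tendsto_div_const_atBot_of_pos hm1]
    exact (tendsto_atBot_add_const_left atTop T₁ tendsto_neg_atTop_atBot).congr (fun x => (sub_eq_add_neg T₁ x).symm)
  -- quotient E/(1+E)
  have hq : ∀ s : ℝ, HasDerivAt
      (fun s : ℝ => Real.exp ((T₁ - s) / ((m:ℝ)+1)) / (1 + Real.exp ((T₁ - s) / ((m:ℝ)+1))))
      (-(Real.exp ((T₁ - s) / ((m:ℝ)+1)) / ((m:ℝ)+1))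
        / (1 + Real.exp ((T₁ - s) / ((m:ℝ)+1)))^2) s := by
    intro s
    have h := (hE s).fun_div ((hasDerivAt_const s (1:ℝ)).fun_add (hE s)) (h1E' s)
    refine h.congr_deriv (Eq.symm ?_)
    field_simp
    ring
  have hqlim : Tendsto
      (fun s : ℝ => Real.exp ((T₁ - s) / ((m:ℝ)+1)) / (1 + Real.exp ((T₁ - s) / ((m:ℝ)+1))))
      atTop (𝓝 0) := by
    have hden : Tendsto (fun s : ℝ => 1 + Real.exp ((T₁ - s) / ((m:ℝ)+1))) atTop (𝓝 1) := by
      simpa using (tendsto_const_nhds (x := (1:ℝ)) (f := atTop)).add hE0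
    simpa [Pi.div_def] using hE0.div hden one_ne_zero
  constructor
  · -- Part 1
    set K : ℝ := g' / ((m:ℝ) + 1) * (((m:ℝ) + 2) / (((m:ℝ) + 1) * g')) ^ (m + 2) with hK
    have hterm : ∀ s : ℝ, ∀ r ∈ Finset.range (m+2), HasDerivAt
        (fun s : ℝ => (-1:ℝ)^r * (((m+1).choose r : ℕ) : ℝ)
          / (((r:ℝ)+2) * (1 + Real.exp ((T₁ - s) / ((m:ℝ)+1)))^(r+2)))
        ((-1:ℝ)^r * (((m+1).choose r : ℕ) : ℝ) * Real.exp ((T₁ - s) / ((m:ℝ)+1))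
          / (((m:ℝ)+1) * (1 + Real.exp ((T₁ - s) / ((m:ℝ)+1)))^(r+3))) s := by
      intro s r _
      have hden := HasDerivAt.const_mul ((r:ℝ)+2)
        (((hasDerivAt_const s (1:ℝ)).fun_add (hE s)).fun_pow (r+2))
      have hne : ((r:ℝ)+2) * (1 + Real.exp ((T₁ - s) / ((m:ℝ)+1)))^(r+2) ≠ 0 := by
        have := h1E s; positivity
      have h := (hasDerivAt_const s ((-1:ℝ)^r * (((m+1).choose r : ℕ) : ℝ))).fun_div hden hne
      refine h.congr_deriv (Eq.symm ?_)
      have h1e' := h1E' s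
      have hrne : ((r:ℝ)+2) ≠ 0 := by positivity
      have e3 : r + 2 - 1 = r + 1 := rfl
      set e := Real.exp ((T₁ - s) / ((m:ℝ)+1)) with he
      simp only [e3]
      push_cast
      field_simp
      ring
    have hd : ∀ s ∈ Set.Ici t, HasDerivAt
        (fun s : ℝ => -(K * ∑ r ∈ Finset.range (m+2), (-1:ℝ)^r * (((m+1).choose r : ℕ) : ℝ)
            / (((r:ℝ)+2) * (1 + Real.exp ((T₁ - s) / ((m:ℝ)+1)))^(r+2))))
        (((↑m + 2) / ((↑m + 1) * g') * Real.exp ((T₁ - s) / (↑m + 1)) / (1 + Real.exp ((T₁ - s) / (↑m + 1)))) ^ m *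
            (-((↑m + 2) / ((↑m + 1) ^ 2 * g')) * Real.exp ((T₁ - s) / (↑m + 1)) /
              (1 + Real.exp ((T₁ - s) / (↑m + 1))) ^ 2) *
          ((↑m + 2) / (↑m + 1) ^ 2 * Real.exp ((T₁ - s) / (↑m + 1)) / (1 + Real.exp ((T₁ - s) / (↑m + 1))) ^ 2)) s := by
      intro s _
      have hsum := HasDerivAt.fun_sum (fun r hr => hterm s r hr)
      have h := (hsum.const_mul K).fun_neg
      refine h.congr_deriv (Eq.symm ?_)
      have hsumeval : ∑ r ∈ Finset.range (m+2), (-1:ℝ)^r * (((m+1).choose r : ℕ) : ℝ)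
            * Real.exp ((T₁ - s) / ((m:ℝ)+1)) / (((m:ℝ)+1) * (1 + Real.exp ((T₁ - s) / ((m:ℝ)+1)))^(r+3))
          = Real.exp ((T₁ - s) / ((m:ℝ)+1)) ^ (m+2)
            / (((m:ℝ)+1) * (1 + Real.exp ((T₁ - s) / ((m:ℝ)+1)))^(m+4)) := by
        have h1e' := h1E' s
        set e := Real.exp ((T₁ - s) / ((m:ℝ)+1)) with he
        have step : ∀ r ∈ Finset.range (m+2),
            (-1:ℝ)^r * (((m+1).choose r : ℕ) : ℝ) * e / (((m:ℝ)+1) * (1+e)^(r+3))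
            = ((-1:ℝ)^r * (((m+1).choose r : ℕ) : ℝ) * (1+e)^(m+1-r))
                * (e / (((m:ℝ)+1) * (1+e)^(m+4))) := by
          intro r hr
          rw [Finset.mem_range] at hr
          have hpow : (1+e)^(m+4) = (1+e)^(r+3) * (1+e)^(m+1-r) := by
            rw [← pow_add]; congr 1; omega
          rw [hpow]
          have h3 : (1+e)^(r+3) ≠ 0 := pow_ne_zero _ h1e'
          have h4 : (1+e)^(m+1-r) ≠ 0 := pow_ne_zero _ h1e'
          field_simp
        rw [Finset.sum_congr rfl step, ← Finset.sum_mul, collapse e (m+1)]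
        field_simp
        ring
      rw [hsumeval, hK]
      exact alg1 m g' (Real.exp ((T₁ - s) / ((m:ℝ)+1))) hg0 (h1E' s)
    have hneg : ∀ s ∈ Set.Ioi t,
        (((↑m + 2) / ((↑m + 1) * g') * Real.exp ((T₁ - s) / (↑m + 1)) / (1 + Real.exp ((T₁ - s) / (↑m + 1)))) ^ m *
            (-((↑m + 2) / ((↑m + 1) ^ 2 * g')) * Real.exp ((T₁ - s) / (↑m + 1)) /
              (1 + Real.exp ((T₁ - s) / (↑m + 1))) ^ 2) *
          ((↑m + 2) / (↑m + 1) ^ 2 * Real.exp ((T₁ - s) / (↑m + 1)) / (1 + Real.exp ((T₁ - s) / (↑m + 1))) ^ 2)) ≤ 0 := by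
      intro s _
      rw [alg1 m g' (Real.exp ((T₁ - s) / ((m:ℝ)+1))) hg0 (h1E' s)]
      have he := hEpos s
      have h1e := h1E s
      apply neg_nonpos.mpr
      positivity
    have hlim : Tendsto
        (fun s : ℝ => -(K * ∑ r ∈ Finset.range (m+2), (-1:ℝ)^r * (((m+1).choose r : ℕ) : ℝ)
            / (((r:ℝ)+2) * (1 + Real.exp ((T₁ - s) / ((m:ℝ)+1)))^(r+2))))
        atTop (𝓝 (-(K * (1/(((m:ℝ)+2)*((m:ℝ)+3)))))) := by
      have hterml : ∀ r ∈ Finset.range (m+2), Tendsto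
          (fun s : ℝ => (-1:ℝ)^r * (((m+1).choose r : ℕ) : ℝ)
            / (((r:ℝ)+2) * (1 + Real.exp ((T₁ - s) / ((m:ℝ)+1)))^(r+2)))
          atTop (𝓝 ((-1:ℝ)^r * (((m+1).choose r : ℕ) : ℝ) / ((r:ℝ)+2))) := by
        intro r _
        have h1 : Tendsto (fun s : ℝ => 1 + Real.exp ((T₁ - s) / ((m:ℝ)+1))) atTop (𝓝 1) := by
          simpa using (tendsto_const_nhds (x := (1:ℝ)) (f := atTop)).add hE0
        have hden : Tendsto (fun s : ℝ => ((r:ℝ)+2) * (1 + Real.exp ((T₁ - s) / ((m:ℝ)+1)))^(r+2))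
            atTop (𝓝 (((r:ℝ)+2))) := by
          have := (h1.pow (r+2)).const_mul ((r:ℝ)+2)
          simpa using this
        exact tendsto_const_nhds.div hden (by positivity)
      have hsuml := tendsto_finset_sum (Finset.range (m+2)) hterml
      have hsum_val : ∑ r ∈ Finset.range (m+2), (-1:ℝ)^r * (((m+1).choose r : ℕ) : ℝ) / ((r:ℝ)+2)
          = 1/(((m:ℝ)+2)*((m:ℝ)+3)) := by
        rw [show (1:ℝ)/(((m:ℝ)+2)*((m:ℝ)+3))
            = 1/(((↑(m+1):ℝ)+1)*((↑(m+1):ℝ)+2)) from by push_cast; ring]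
        exact key_sum (m+1)
      have h2 := (hsuml.const_mul K).neg
      rw [hsum_val] at h2
      exact h2
    rw [integral_Ioi_of_hasDerivAt_of_nonpos' hd hneg hlim]
    push_cast
    ring
  · -- Part 2
    set K : ℝ := g' / ((m:ℝ) + 2 + 1) * (((m:ℝ) + 2) / (((m:ℝ) + 1) * g')) ^ (m + 2 + 1) with hK
    have hd : ∀ s ∈ Set.Ici t, HasDerivAt
        (fun s : ℝ => -(K * (Real.exp ((T₁ - s) / ((m:ℝ)+1)) / (1 + Real.exp ((T₁ - s) / ((m:ℝ)+1))))^(m+3)))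
        (((↑m + 2) / ((↑m + 1) * g') * Real.exp ((T₁ - s) / (↑m + 1)) / (1 + Real.exp ((T₁ - s) / (↑m + 1)))) ^ (m + 2) *
          ((↑m + 2) / (↑m + 1) ^ 2 * Real.exp ((T₁ - s) / (↑m + 1)) / (1 + Real.exp ((T₁ - s) / (↑m + 1))) ^ 2)) s := by
      intro s _
      have h := (((hq s).fun_pow (m+3)).const_mul K).fun_neg
      refine h.congr_deriv (Eq.symm ?_)
      have he := hEpos s
      have h1e := h1E s
      have h1e' := h1E' s
      have e3 : m + 3 - 1 = m + 2 := rfl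
      simp only [e3]
      rw [hK]
      linear_combination alg2 m g' (Real.exp ((T₁ - s) / ((m:ℝ)+1))) hg0 (h1E' s)
    have hpos : ∀ s ∈ Set.Ioi t, 0 ≤
        ((↑m + 2) / ((↑m + 1) * g') * Real.exp ((T₁ - s) / (↑m + 1)) / (1 + Real.exp ((T₁ - s) / (↑m + 1)))) ^ (m + 2) *
          ((↑m + 2) / (↑m + 1) ^ 2 * Real.exp ((T₁ - s) / (↑m + 1)) / (1 + Real.exp ((T₁ - s) / (↑m + 1))) ^ 2) := by
      intro s _
      have he := hEpos s
      have h1e := h1E s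
      positivity
    have hlim : Tendsto
        (fun s : ℝ => -(K * (Real.exp ((T₁ - s) / ((m:ℝ)+1)) / (1 + Real.exp ((T₁ - s) / ((m:ℝ)+1))))^(m+3)))
        atTop (𝓝 0) := by
      have h := ((hqlim.pow (m+3)).const_mul K).neg
      simpa using h
    rw [integral_Ioi_of_hasDerivAt_of_nonneg' hd hpos hlim]
    have h1e := h1E t
    rw [div_pow]
    have : (m + 3) = (m + 2 + 1) := by omega
    rw [this]
    ring
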